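/- For v ∈ RG, the matrix [I_n | σ(v)] satisfies [I_n | σ(v)]·[I_n | σ(v)]^T = 0 if and only if v·v^T = −1 in RG. In particular, in that case v is a unit of RG. -/

import Mathlib

open Matrix

/-- The matrix σ(v) of a group ring element, with (i,j) entry the coefficient of i⁻¹ * j. -/
noncomputable def sigmaMat {R G : Type*} [Semiring R] [Group G] (v : MonoidAlgebra R G) :
    Matrix G G R := Matrix.of fun i j => v.coeff (i⁻¹ * j)

/-- The canonical involution on a group ring, sending Σ αᵢ gᵢ to Σ αᵢ gᵢ⁻¹. -/
noncomputable def transInvol {R G : Type*} [Semiring R] [Group G] (v : MonoidAlgebra R G) :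
    MonoidAlgebra R G := MonoidAlgebra.ofCoeff (Finsupp.equivMapDomain (Equiv.inv G) v.coeff)
/-- The Euclidean dual of a linear code C ⊆ R^ι. -/
noncomputable def dualCode {R ι : Type*} [CommRing R] [Fintype ι] (C : Submodule R (ι → R)) :
    Submodule R (ι → R) where
  carrier := {x | ∀ c ∈ C, ∑ i, x i * c i = 0}
  add_mem' := by
    intro a b ha hb c hc
    have h1 := ha c hc
    have h2 := hb c hc
    simp only [Pi.add_apply, add_mul, Finset.sum_add_distrib, h1, h2, add_zero]
  zero_mem' := by intro c hc; simp
  smul_mem' := by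
    intro r x hx c hc
    have h := hx c hc
    simp only [Pi.smul_apply, smul_eq_mul, mul_assoc]
    rw [← Finset.mul_sum, h, mul_zero]

lemma mul_apply_fintype {R G : Type*} [Semiring R] [Group G] [Fintype G] [DecidableEq G]
    (f g : MonoidAlgebra R G) (x : G) : (f * g).coeff x = ∑ a, f.coeff a * g.coeff (a⁻¹ * x) := by
  rw [MonoidAlgebra.coeff_mul_antidiag f g x
    (Finset.univ.filter fun p => p.1 * p.2 = x) (by simp)]
  refine Finset.sum_bij' (fun p _ => p.1) (fun a _ => (a, a⁻¹ * x)) ?_ ?_ ?_ ?_ ?_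
  · intros; simp
  · intro a _; simp
  · intro p hp
    simp only [Finset.mem_filter, Finset.mem_univ, true_and] at hp
    ext <;> simp [← hp, mul_assoc]
  · intro a _; rfl
  · intro p hp
    simp only [Finset.mem_filter, Finset.mem_univ, true_and] at hp
    simp [← hp, mul_assoc]

lemma sigmaMat_mul_transpose {R G : Type*} [CommRing R] [Group G] [Fintype G] [DecidableEq G]
    (v : MonoidAlgebra R G) :
    sigmaMat v * (sigmaMat v)ᵀ = sigmaMat (v * transInvol v) := by
  ext i j
  simp only [sigmaMat, Matrix.mul_apply, Matrix.transpose_apply, Matrix.of_apply,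
    mul_apply_fintype, transInvol, MonoidAlgebra.coeff_ofCoeff, Finsupp.equivMapDomain_apply, Equiv.inv_symm, Equiv.inv_apply]
  refine Fintype.sum_equiv (Equiv.mulLeft i⁻¹) _ _ fun k => ?_
  simp only [Equiv.coe_mulLeft]
  congr 1
  congr 1
  group

lemma sigmaMat_injective {R G : Type*} [Semiring R] [Group G] :
    Function.Injective (sigmaMat (R := R) (G := G)) := by
  intro a b h
  ext g
  have := congrFun (congrFun h 1) g
  simpa only [sigmaMat, Matrix.of_apply, inv_one, one_mul] using this

lemma sigmaMat_neg_one {R G : Type*} [Ring R] [Group G] [DecidableEq G] :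
    sigmaMat (-1 : MonoidAlgebra R G) = -1 := by
  ext i j
  simp only [sigmaMat, Matrix.of_apply, MonoidAlgebra.one_def, Matrix.neg_apply,
    Matrix.one_apply]
  rw [MonoidAlgebra.coeff_neg, MonoidAlgebra.coeff_single, Finsupp.neg_apply]
  simp only [Finsupp.single_apply]
  by_cases h : i = j
  · subst h; simp
  · have h1 : (1 : G) ≠ i⁻¹ * j := fun hh => h (inv_mul_eq_one.mp hh.symm)
    simp [h, h1]

/-- [Iₙ | σ(v)]·[Iₙ | σ(v)]ᵀ = 0 iff v·vᵀ = -1 in RG; in that case v is a unit. -/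
theorem stmt_9 (R G : Type*) [CommRing R] [Fintype R] [Group G] [Fintype G] [DecidableEq G]
    (v : MonoidAlgebra R G) :
    ((Matrix.fromCols (1 : Matrix G G R) (sigmaMat v))
        * (Matrix.fromCols (1 : Matrix G G R) (sigmaMat v))ᵀ = 0
      ↔ v * transInvol v = -1) ∧
      (v * transInvol v = -1 → IsUnit v) := by
  constructor
  · rw [Matrix.transpose_fromCols, Matrix.fromCols_mul_fromRows,
      Matrix.transpose_one, mul_one]
    constructor
    · intro h
      apply sigmaMat_injective
      rw [sigmaMat_neg_one, ← sigmaMat_mul_transpose]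
      exact eq_neg_of_add_eq_zero_right h
    · intro h
      rw [sigmaMat_mul_transpose, h, sigmaMat_neg_one]
      simp
  · intro h
    have h1 : v * (-transInvol v) = 1 := by rw [mul_neg, h, neg_neg]
    have : Finite (MonoidAlgebra R G) := Finite.of_equiv _ (Finsupp.equivFunOnFinite.symm.trans MonoidAlgebra.coeffEquiv.symm)
    rw [IsUnit.isUnit_iff_mulRight_bijective, ← Finite.injective_iff_bijective]
    intro x y hxy
    have : x * (v * (-transInvol v)) = y * (v * (-transInvol v)) := by
      rw [← mul_assoc, ← mul_assoc]
      exact congrArg (· * (-transInvol v)) hxy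
    simpa [h1] using this
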